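/- Let (L_1,…,L_{m−1}) ∈ Y_{m−1} with m ≤ N. Then the set of subspaces L_m ⊆ E such that (L_1,…,L_{m−1},L_m) ∈ Y_m is exactly the set of m-dimensional subspaces L_m with L_{m−1} ⊊ L_m ⊆ z^{-1}L_{m−1}, and the quotient z^{-1}L_{m−1}/L_{m−1} is two-dimensional; hence this set is in natural bijection with the set of complex lines in z^{-1}L_{m−1}/L_{m−1}. -/

import Mathlib

open scoped ComplexInnerProductSpace

noncomputable section

abbrev E (N : ℕ) := EuclideanSpace ℂ (Fin N ⊕ Fin N)

def zmap (N : ℕ) : E N →ₗ[ℂ] E N where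
  toFun v := WithLp.toLp 2 (fun i =>
    match i with
    | Sum.inl j => if h : (j : ℕ) + 1 < N then v (Sum.inl ⟨(j : ℕ) + 1, h⟩) else 0
    | Sum.inr j => if h : (j : ℕ) + 1 < N then v (Sum.inr ⟨(j : ℕ) + 1, h⟩) else 0)
  map_add' u v := by
    ext i
    rcases i with j | j <;> simp only [PiLp.add_apply] <;> split <;> simp
  map_smul' c v := by
    ext i
    rcases i with j | j <;> simp only [PiLp.smul_apply, RingHom.id_apply, smul_eq_mul] <;>
      split <;> simp

def Cmap (N : ℕ) : E N →ₗ[ℂ] EuclideanSpace ℂ (Fin 2) where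
  toFun v := WithLp.toLp 2 (fun i => if i = 0 then ∑ j : Fin N, v (Sum.inl j) else ∑ j : Fin N, v (Sum.inr j))
  map_add' u v := by
    ext i
    by_cases h : i = (0 : Fin 2) <;> simp [h, PiLp.add_apply, Finset.sum_add_distrib]
  map_smul' c v := by
    ext i
    by_cases h : i = (0 : Fin 2) <;> simp [h, PiLp.smul_apply, Finset.mul_sum]

/-- `Ym N m` : complete flags `0 = L_0 ⊊ L_1 ⊊ … ⊊ L_m` of `z`-stable subspaces of `E`
with `dim L_j = j`.  A tuple `(L_1,…,L_m) ∈ Y_m` is encoded as the function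
`L : Fin (m+1) → Submodule ℂ (E N)` with the convention `L 0 = 0`. -/
def Ym (N m : ℕ) : Set (Fin (m + 1) → Submodule ℂ (E N)) :=
  {L | L 0 = ⊥ ∧ StrictMono L ∧ (∀ j : Fin (m + 1), Module.finrank ℂ (L j) = (j : ℕ)) ∧
    ∀ j : Fin (m + 1), (L j).map (zmap N) ≤ L j}

/-- The map `φ_m`, in coordinates: `φ_m(L)_j = C(L_{j+1} ∩ L_j^⊥)` (0-based `j`),
i.e. the tuple `(C(L_1), C(L_2 ∩ L_1^⊥), …, C(L_m ∩ L_{m-1}^⊥))`. -/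
def phiRaw (N m : ℕ) (L : Fin (m + 1) → Submodule ℂ (E N)) :
    Fin m → Submodule ℂ (EuclideanSpace ℂ (Fin 2)) :=
  fun j => ((L j.succ) ⊓ (L j.castSucc)ᗮ).map (Cmap N)

/-- `X_{m,i} = {(L_1,…,L_m) ∈ Y_m : L_{i+1} = z^{-1}(L_{i-1})}` (with `L_0 = 0`). -/
def Xmi (N m i : ℕ) : Set (Fin (m + 1) → Submodule ℂ (E N)) :=
  {L | L ∈ Ym N m ∧ ∀ (h : i + 1 < m + 1) (h' : i - 1 < m + 1),
    L ⟨i + 1, h⟩ = (L ⟨i - 1, h'⟩).comap (zmap N)}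

/-- `A_{m,i} = {(l_1,…,l_m) ∈ (ℙ¹)^m : l_{i+1} = l_i^⊥}`; a point of `(ℙ¹)^m` is encoded
as a tuple of rank-one subspaces of `ℂ²`, the line `l_k` sitting at 0-based index `k-1`. -/
def Ami (m i : ℕ) : Set (Fin m → Submodule ℂ (EuclideanSpace ℂ (Fin 2))) :=
  {l | (∀ j, Module.finrank ℂ (l j) = 1) ∧
    ∀ (h : i < m) (h' : i - 1 < m), l ⟨i, h⟩ = (l ⟨i - 1, h'⟩)ᗮ}

/-- `q_{m,i}(L_1,…,L_m) = (L_1,…,L_{i-1}, zL_{i+2},…,zL_m)`. -/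
def qRaw (N m i : ℕ) (hm : 2 ≤ m) (L : Fin (m + 1) → Submodule ℂ (E N)) :
    Fin (m - 2 + 1) → Submodule ℂ (E N) :=
  fun j =>
    if (j : ℕ) < i then L ⟨(j : ℕ), by have := j.isLt; omega⟩
    else (L ⟨(j : ℕ) + 2, by have := j.isLt; omega⟩).map (zmap N)

/-- The forgetful map `g_{m,i}(l_1,…,l_m) = (l_1,…,l_{i-1}, l_{i+2},…,l_m)`. -/
def gRaw (m i : ℕ) (l : Fin m → Submodule ℂ (EuclideanSpace ℂ (Fin 2))) :
    Fin (m - 2) → Submodule ℂ (EuclideanSpace ℂ (Fin 2)) :=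
  fun k =>
    if (k : ℕ) + 1 < i then l ⟨(k : ℕ), by have := k.isLt; omega⟩
    else l ⟨(k : ℕ) + 2, by have := k.isLt; omega⟩

/-- The involution `I_{2n}` of `(ℙ¹)^m`: `l_j ↦ l_j` for `j` odd, `l_j ↦ l_j^⊥` for `j` even
(the line `l_j` sits at 0-based index `j-1`). -/
def Imap (m : ℕ) (l : Fin m → Submodule ℂ (EuclideanSpace ℂ (Fin 2))) :
    Fin m → Submodule ℂ (EuclideanSpace ℂ (Fin 2)) :=
  fun k => if (k : ℕ) % 2 = 0 then l k else (l k)ᗮ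

/-- A crossingless matching of the `2n` points `{1,…,2n}`: a partition of `{1,…,2n}` into
`n` pairs (each pair recorded as `(i,j)` with `i < j`) such that there is no quadruple
`i < j < k < l` with `(i,k)` and `(j,l)` paired. -/
structure CrossinglessMatching (n : ℕ) where
  pairs : Finset (ℕ × ℕ)
  card_eq : pairs.card = n
  lt : ∀ p ∈ pairs, p.1 < p.2
  mem_range : ∀ p ∈ pairs, 1 ≤ p.1 ∧ p.2 ≤ 2 * n
  cover : ∀ k, 1 ≤ k → k ≤ 2 * n → ∃! p, p ∈ pairs ∧ (p.1 = k ∨ p.2 = k)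
  noncross : ∀ i j k l : ℕ, i < j → j < k → k < l → (i, k) ∈ pairs → (j, l) ∉ pairs

/-- `{(L_1,…,L_m) ∈ Y_m : L_{s_a(j)} = z^{-d_a(j)} L_{j-1} for all j ∈ O_a}`, where for a
pair `(i,j)` of the matching, `s_a(i) = j`, `d_a(i) = (j-i+1)/2`, and `z^{-d}` is the
`d`-fold preimage under `z`. -/
def KaSet (N m : ℕ) (pairs : Finset (ℕ × ℕ)) : Set (Fin (m + 1) → Submodule ℂ (E N)) :=
  {L | L ∈ Ym N m ∧ ∀ p ∈ pairs,
    L (Fin.ofNat (m + 1) p.2) =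
      (L (Fin.ofNat (m + 1) (p.1 - 1 : ℕ))).comap ((zmap N) ^ ((p.2 - p.1 + 1) / 2))}

/-- `S_a = {(l_1,…,l_{2n}) ∈ (ℙ¹)^{2n} : l_{s_a(j)} = l_j ∀ j ∈ O_a}` (0-based indexing, so
`l_k` sits at index `k-1`). -/
def SaSet (m : ℕ) (pairs : Finset (ℕ × ℕ)) :
    Set (Fin m → Submodule ℂ (EuclideanSpace ℂ (Fin 2))) :=
  {l | (∀ j, Module.finrank ℂ (l j) = 1) ∧
    ∀ p ∈ pairs, ∀ (h2 : p.2 - 1 < m) (h1 : p.1 - 1 < m), l ⟨p.2 - 1, h2⟩ = l ⟨p.1 - 1, h1⟩}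

/-- `T_a = {(l_1,…,l_{2n}) ∈ (ℙ¹)^{2n} : l_{s_a(j)} = l_j^⊥ ∀ j ∈ O_a}`. -/
def TaSet (m : ℕ) (pairs : Finset (ℕ × ℕ)) :
    Set (Fin m → Submodule ℂ (EuclideanSpace ℂ (Fin 2))) :=
  {l | (∀ j, Module.finrank ℂ (l j) = 1) ∧
    ∀ p ∈ pairs, ∀ (h2 : p.2 - 1 < m) (h1 : p.1 - 1 < m), l ⟨p.2 - 1, h2⟩ = (l ⟨p.1 - 1, h1⟩)ᗮ}

lemma zmap_apply_inl (N : ℕ) (v : E N) (j : Fin N) :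
    zmap N v (Sum.inl j) = if h : (j : ℕ) + 1 < N then v (Sum.inl ⟨(j : ℕ) + 1, h⟩) else 0 := rfl

lemma zmap_apply_inr (N : ℕ) (v : E N) (j : Fin N) :
    zmap N v (Sum.inr j) = if h : (j : ℕ) + 1 < N then v (Sum.inr ⟨(j : ℕ) + 1, h⟩) else 0 := rfl

lemma zpow_apply_inl (N : ℕ) (k : ℕ) (v : E N) (j : Fin N) :
    ((zmap N ^ k) v) (Sum.inl j) =
      if h : (j : ℕ) + k < N then v (Sum.inl ⟨(j : ℕ) + k, h⟩) else 0 := by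
  induction k generalizing v j with
  | zero =>
    simp only [pow_zero, Module.End.one_apply]
    rw [dif_pos (by omega : (j : ℕ) + 0 < N)]
    exact congrArg v (congrArg Sum.inl (Fin.ext (by simp)))
  | succ k ih =>
    rw [pow_succ, Module.End.mul_apply]
    rw [ih (zmap N v) j]
    by_cases h : (j : ℕ) + k < N
    · rw [dif_pos h, zmap_apply_inl]
      by_cases h2 : (j : ℕ) + k + 1 < N
      · rw [dif_pos h2, dif_pos (by omega : (j : ℕ) + (k+1) < N)]
        exact congrArg v (congrArg Sum.inl (Fin.ext (by simp [Nat.add_assoc])))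
      · rw [dif_neg h2, dif_neg (by omega : ¬ ((j : ℕ) + (k+1) < N))]
    · rw [dif_neg h, dif_neg (by omega : ¬ ((j : ℕ) + (k+1) < N))]

lemma zpow_apply_inr (N : ℕ) (k : ℕ) (v : E N) (j : Fin N) :
    ((zmap N ^ k) v) (Sum.inr j) =
      if h : (j : ℕ) + k < N then v (Sum.inr ⟨(j : ℕ) + k, h⟩) else 0 := by
  induction k generalizing v j with
  | zero =>
    simp only [pow_zero, Module.End.one_apply]
    rw [dif_pos (by omega : (j : ℕ) + 0 < N)]
    exact congrArg v (congrArg Sum.inr (Fin.ext (by simp)))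
  | succ k ih =>
    rw [pow_succ, Module.End.mul_apply]
    rw [ih (zmap N v) j]
    by_cases h : (j : ℕ) + k < N
    · rw [dif_pos h, zmap_apply_inr]
      by_cases h2 : (j : ℕ) + k + 1 < N
      · rw [dif_pos h2, dif_pos (by omega : (j : ℕ) + (k+1) < N)]
        exact congrArg v (congrArg Sum.inr (Fin.ext (by simp [Nat.add_assoc])))
      · rw [dif_neg h2, dif_neg (by omega : ¬ ((j : ℕ) + (k+1) < N))]
    · rw [dif_neg h, dif_neg (by omega : ¬ ((j : ℕ) + (k+1) < N))]

lemma zmapPow_eq_zero (N : ℕ) {k : ℕ} (hk : N ≤ k) (v : E N) : (zmap N ^ k) v = 0 := by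
  ext i
  rcases i with j | j
  · rw [zpow_apply_inl, dif_neg (by omega)]; rfl
  · rw [zpow_apply_inr, dif_neg (by omega)]; rfl

lemma stable_pow_mem {N : ℕ} {K : Submodule ℂ (E N)} (hK : K.map (zmap N) ≤ K)
    {x : E N} (hx : x ∈ K) (k : ℕ) : (zmap N ^ k) x ∈ K := by
  induction k with
  | zero => simpa using hx
  | succ k ih =>
    rw [pow_succ', Module.End.mul_apply]
    exact hK ⟨_, ih, rfl⟩

lemma finrank_eq_map_add {V V' : Type*} [AddCommGroup V] [Module ℂ V] [AddCommGroup V']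
    [Module ℂ V'] [FiniteDimensional ℂ V] (f : V →ₗ[ℂ] V') (p : Submodule ℂ V)
    (h : LinearMap.ker f ≤ p) :
    Module.finrank ℂ p = Module.finrank ℂ (p.map f) + Module.finrank ℂ (LinearMap.ker f) := by
  have h1 := LinearMap.finrank_range_add_finrank_ker (f.domRestrict p)
  rw [LinearMap.range_domRestrict, LinearMap.ker_domRestrict] at h1
  rw [← h1, (Submodule.comapSubtypeEquivOfLe h).finrank_eq]

lemma finrank_ker_zmap {N : ℕ} (hN : 0 < N) :
    Module.finrank ℂ (LinearMap.ker (zmap N)) = 2 := by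
  let κ : EuclideanSpace ℂ (Fin 2) →ₗ[ℂ] E N :=
    { toFun := fun a => WithLp.toLp 2 (fun i =>
        match i with
        | Sum.inl j => if (j : ℕ) = 0 then a 0 else 0
        | Sum.inr j => if (j : ℕ) = 0 then a 1 else 0)
      map_add' := by
        intro a b
        ext i
        rcases i with j | j <;> simp only [PiLp.add_apply] <;> split <;> simp
      map_smul' := by
        intro c a
        ext i
        rcases i with j | j <;> simp only [PiLp.smul_apply, RingHom.id_apply, smul_eq_mul] <;>
          split <;> simp }
  have κ_inl : ∀ (a : EuclideanSpace ℂ (Fin 2)) (j : Fin N),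
      κ a (Sum.inl j) = if (j : ℕ) = 0 then a 0 else 0 := fun _ _ => rfl
  have κ_inr : ∀ (a : EuclideanSpace ℂ (Fin 2)) (j : Fin N),
      κ a (Sum.inr j) = if (j : ℕ) = 0 then a 1 else 0 := fun _ _ => rfl
  have hinj : Function.Injective κ := by
    intro a b hab
    ext t
    fin_cases t
    · have := congrArg (fun x : E N => x (Sum.inl ⟨0, hN⟩)) hab
      rwa [κ_inl, κ_inl, if_pos rfl, if_pos rfl] at this
    · have := congrArg (fun x : E N => x (Sum.inr ⟨0, hN⟩)) hab
      rwa [κ_inr, κ_inr, if_pos rfl, if_pos rfl] at this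
  have hrange : LinearMap.range κ = LinearMap.ker (zmap N) := by
    apply le_antisymm
    · rintro _ ⟨a, rfl⟩
      rw [LinearMap.mem_ker]
      ext i
      have h0 : (0 : E N) i = 0 := rfl
      rcases i with j | j
      · rw [h0, zmap_apply_inl]
        split
        · rw [κ_inl, if_neg (by simp)]
        · rfl
      · rw [h0, zmap_apply_inr]
        split
        · rw [κ_inr, if_neg (by simp)]
        · rfl
    · intro v hv
      rw [LinearMap.mem_ker] at hv
      have hv' : ∀ i, zmap N v i = 0 := fun i => by rw [hv]; rfl
      refine ⟨WithLp.toLp 2 (fun t => if t = 0 then v (Sum.inl ⟨0, hN⟩) else v (Sum.inr ⟨0, hN⟩)), ?_⟩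
      ext i
      rcases i with j | j
      · rw [κ_inl]
        split
        · rename_i hj0
          rw [PiLp.toLp_apply, if_pos rfl]
          exact congrArg v (congrArg Sum.inl (Fin.ext (by simp [hj0])))
        · rename_i hj0
          have hj1 : (j : ℕ) - 1 + 1 < N := by have := j.isLt; omega
          have := hv' (Sum.inl ⟨(j : ℕ) - 1, by omega⟩)
          rw [zmap_apply_inl, dif_pos hj1] at this
          have heq : (⟨(j : ℕ) - 1 + 1, hj1⟩ : Fin N) = j := Fin.ext (by simp; omega)
          rw [heq] at this
          exact this.symm
      · rw [κ_inr]
        split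
        · rename_i hj0
          exact congrArg v (congrArg Sum.inr (Fin.ext (by simp [hj0])))
        · rename_i hj0
          have hj1 : (j : ℕ) - 1 + 1 < N := by have := j.isLt; omega
          have := hv' (Sum.inr ⟨(j : ℕ) - 1, by omega⟩)
          rw [zmap_apply_inr, dif_pos hj1] at this
          have heq : (⟨(j : ℕ) - 1 + 1, hj1⟩ : Fin N) = j := Fin.ext (by simp; omega)
          rw [heq] at this
          exact this.symm
  rw [← hrange, LinearMap.finrank_range_of_inj hinj]
  simp

lemma stable_le_range {N : ℕ} {K : Submodule ℂ (E N)} (hK : K.map (zmap N) ≤ K)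
    (hdim : Module.finrank ℂ K < N) : K ≤ LinearMap.range (zmap N) := by
  have hN' : 0 < N := by omega
  intro v hv
  by_cases hlast : v (Sum.inl ⟨N - 1, by omega⟩) = 0 ∧ v (Sum.inr ⟨N - 1, by omega⟩) = 0
  · -- construct a preimage
    let wf : E N := WithLp.toLp 2 (fun i =>
      match i with
      | Sum.inl j => if h : 0 < (j : ℕ) then v (Sum.inl ⟨(j : ℕ) - 1, by omega⟩) else 0
      | Sum.inr j => if h : 0 < (j : ℕ) then v (Sum.inr ⟨(j : ℕ) - 1, by omega⟩) else 0)
    have wf_inl : ∀ j : Fin N, wf (Sum.inl j) =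
        if h : 0 < (j : ℕ) then v (Sum.inl ⟨(j : ℕ) - 1, by omega⟩) else 0 := fun _ => rfl
    have wf_inr : ∀ j : Fin N, wf (Sum.inr j) =
        if h : 0 < (j : ℕ) then v (Sum.inr ⟨(j : ℕ) - 1, by omega⟩) else 0 := fun _ => rfl
    refine ⟨wf, ?_⟩
    ext i
    rcases i with j | j
    · rw [zmap_apply_inl]
      split
      · rw [wf_inl, dif_pos (by simp)]
        exact congrArg v (congrArg Sum.inl (Fin.ext (by simp)))
      · rename_i h
        have : j = ⟨N - 1, by omega⟩ := Fin.ext (by have := j.isLt; simp; omega)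
        rw [this]
        exact hlast.1.symm
    · rw [zmap_apply_inr]
      split
      · rw [wf_inr, dif_pos (by simp)]
        exact congrArg v (congrArg Sum.inr (Fin.ext (by simp)))
      · rename_i h
        have : j = ⟨N - 1, by omega⟩ := Fin.ext (by have := j.isLt; simp; omega)
        rw [this]
        exact hlast.2.symm
  · -- contradiction: K has dimension ≥ N
    exfalso
    have hz : (zmap N ^ (N - 1)) v ≠ 0 := by
      intro h
      apply hlast
      constructor
      · have : ((zmap N ^ (N - 1)) v) (Sum.inl ⟨0, hN'⟩) = (0 : E N) (Sum.inl ⟨0, hN'⟩) := by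
          rw [h]
        rw [zpow_apply_inl, dif_pos (by simp; omega)] at this
        exact (congrArg v (congrArg Sum.inl (Fin.ext (by simp)))).trans this
      · have : ((zmap N ^ (N - 1)) v) (Sum.inr ⟨0, hN'⟩) = (0 : E N) (Sum.inr ⟨0, hN'⟩) := by
          rw [h]
        rw [zpow_apply_inr, dif_pos (by simp; omega)] at this
        exact (congrArg v (congrArg Sum.inr (Fin.ext (by simp)))).trans this
    set b : Fin N → E N := fun k => (zmap N ^ (k : ℕ)) v with hb
    have hli : LinearIndependent ℂ b := by
      rw [Fintype.linearIndependent_iff]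
      intro g hg
      by_contra hgi
      push_neg at hgi
      obtain ⟨i, hi⟩ := hgi
      have hP : ∃ n : ℕ, ∃ h : n < N, g ⟨n, h⟩ ≠ 0 := ⟨i, i.isLt, by simpa using hi⟩
      classical
      let i₀ := Nat.find hP
      obtain ⟨hi₀N, hgi₀⟩ := Nat.find_spec hP
      have hmin : ∀ n < i₀, ∀ h : n < N, g ⟨n, h⟩ = 0 := by
        intro n hn h
        have := Nat.find_min hP hn
        push_neg at this
        exact this h
      have h2 : ∑ k : Fin N, g k • (zmap N ^ (N - 1 - i₀ + (k : ℕ))) v = 0 := by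
        have := congrArg (fun x => (zmap N ^ (N - 1 - i₀)) x) hg
        simp only [map_sum, map_smul, map_zero] at this
        rw [← this]
        apply Finset.sum_congr rfl
        intro k _
        congr 1
        rw [← Module.End.mul_apply, ← pow_add]
      rw [Finset.sum_eq_single (⟨i₀, hi₀N⟩ : Fin N)] at h2
      · rcases smul_eq_zero.mp h2 with h | h
        · exact hgi₀ h
        · apply hz
          have heq : (N - 1 - i₀ : ℕ) + (((⟨i₀, hi₀N⟩ : Fin N) : ℕ)) = N - 1 := by
            simp
            omega
          rwa [heq] at h
      · intro k _ hk
        rcases lt_or_gt_of_ne (fun h => hk (Fin.ext h) : (k : ℕ) ≠ i₀) with h | h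
        · rw [hmin _ h k.isLt, zero_smul]
        · rw [zmapPow_eq_zero N (by omega), smul_zero]
      · intro h
        exact absurd (Finset.mem_univ _) h
    have hspan : Submodule.span ℂ (Set.range b) ≤ K :=
      Submodule.span_le.mpr (by
        rintro _ ⟨k, rfl⟩
        exact stable_pow_mem hK hv (k : ℕ))
    have hcard : Module.finrank ℂ (Submodule.span ℂ (Set.range b)) = N := by
      rw [finrank_span_eq_card hli, Fintype.card_fin]
    have := Submodule.finrank_mono hspan
    rw [hcard] at this
    omega

lemma geom_identity {N : ℕ} (c : ℂ) (u w : E N) (h : w = u + c • zmap N w) (n : ℕ) :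
    w = (∑ k ∈ Finset.range n, c ^ k • (zmap N ^ k) u) + c ^ n • (zmap N ^ n) w := by
  induction n with
  | zero => simp
  | succ n ih =>
    have hz : (zmap N ^ n) w = (zmap N ^ n) u + c • (zmap N ^ (n + 1)) w := by
      calc (zmap N ^ n) w = (zmap N ^ n) (u + c • zmap N w) := by rw [← h]
        _ = (zmap N ^ n) u + c • (zmap N ^ n) (zmap N w) := by rw [map_add, map_smul]
        _ = (zmap N ^ n) u + c • (zmap N ^ (n + 1)) w := by
            rw [← Module.End.mul_apply, ← pow_succ]
    calc w = (∑ k ∈ Finset.range n, c ^ k • (zmap N ^ k) u) + c ^ n • (zmap N ^ n) w := ih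
      _ = (∑ k ∈ Finset.range n, c ^ k • (zmap N ^ k) u) +
          (c ^ n • (zmap N ^ n) u + c ^ (n + 1) • (zmap N ^ (n + 1)) w) := by
          rw [hz, smul_add, smul_smul, ← pow_succ]
      _ = (∑ k ∈ Finset.range (n + 1), c ^ k • (zmap N ^ k) u) +
          c ^ (n + 1) • (zmap N ^ (n + 1)) w := by
          rw [Finset.sum_range_succ, add_assoc]

lemma step_lemma {N m : ℕ} {K Lm : Submodule ℂ (E N)} (hKz : K.map (zmap N) ≤ K)
    (hlt : K < Lm) (hrK : Module.finrank ℂ K = m) (hrL : Module.finrank ℂ Lm = m + 1)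
    (hLz : Lm.map (zmap N) ≤ Lm) : Lm.map (zmap N) ≤ K := by
  rintro _ ⟨v, hv, rfl⟩
  by_cases hwK : zmap N v ∈ K
  · exact hwK
  exfalso
  set w := zmap N v with hw
  have hwL : w ∈ Lm := hLz ⟨v, hv, rfl⟩
  have hsup : K ⊔ Submodule.span ℂ {w} = Lm := by
    have hle : K ⊔ Submodule.span ℂ {w} ≤ Lm :=
      sup_le hlt.le (Submodule.span_le.mpr (Set.singleton_subset_iff.mpr hwL))
    apply Submodule.eq_of_le_of_finrank_le hle
    have h1 : K < K ⊔ Submodule.span ℂ {w} := by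
      refine lt_of_le_of_ne le_sup_left (fun h => hwK ?_)
      rw [h]
      exact Submodule.mem_sup_right (Submodule.mem_span_singleton_self w)
    have h2 := Submodule.finrank_lt_finrank_of_lt h1
    have h3 := Submodule.finrank_mono hle
    omega
  have hv2 : v ∈ K ⊔ Submodule.span ℂ {w} := by rw [hsup]; exact hv
  obtain ⟨u, hu, x, hx, hvux⟩ := Submodule.mem_sup.mp hv2
  obtain ⟨c, rfl⟩ := Submodule.mem_span_singleton.mp hx
  have hrel : w = zmap N u + c • zmap N w := by
    conv_lhs => rw [hw, ← hvux]
    rw [map_add, map_smul]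
  have hzu : zmap N u ∈ K := hKz ⟨u, hu, rfl⟩
  have := geom_identity c (zmap N u) w hrel N
  rw [zmapPow_eq_zero N (le_refl N), smul_zero, add_zero] at this
  apply hwK
  rw [this]
  exact Submodule.sum_mem _ (fun k _ =>
    Submodule.smul_mem _ _ (stable_pow_mem hKz hzu k))

theorem fiber_description (N m' : ℕ) (hmN : m' + 1 ≤ N)
    (L : Fin (m' + 1) → Submodule ℂ (E N)) (hL : L ∈ Ym N m') :
    ({Lm : Submodule ℂ (E N) | Fin.snoc L Lm ∈ Ym N (m' + 1)} =
      {Lm : Submodule ℂ (E N) | Module.finrank ℂ Lm = m' + 1 ∧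
        L (Fin.last m') < Lm ∧ Lm ≤ (L (Fin.last m')).comap (zmap N)}) ∧
    Module.finrank ℂ
      (↥((L (Fin.last m')).comap (zmap N)) ⧸
        ((L (Fin.last m')).comap ((L (Fin.last m')).comap (zmap N)).subtype)) = 2 ∧
    Set.BijOn
      (fun Lm : Submodule ℂ (E N) =>
        (Lm.comap ((L (Fin.last m')).comap (zmap N)).subtype).map
          ((L (Fin.last m')).comap ((L (Fin.last m')).comap (zmap N)).subtype).mkQ)
      {Lm : Submodule ℂ (E N) | Fin.snoc L Lm ∈ Ym N (m' + 1)}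
      {l | Module.finrank ℂ l = 1} := by
  obtain ⟨h0, hmono, hrank, hstab⟩ := hL
  have hKz : (L (Fin.last m')).map (zmap N) ≤ L (Fin.last m') := hstab _
  have hrKn : Module.finrank ℂ (L (Fin.last m')) = m' := by
    have := hrank (Fin.last m'); rwa [Fin.val_last] at this
  set K := L (Fin.last m') with hK
  set W := K.comap (zmap N) with hW
  set K' := K.comap W.subtype with hK'
  have hKW : K ≤ W := Submodule.map_le_iff_le_comap.mp hKz
  have hNpos : 0 < N := by omega
  have hKrange : K ≤ LinearMap.range (zmap N) := stable_le_range hKz (by omega)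
  have hkerW : LinearMap.ker (zmap N) ≤ W := by
    intro x hx
    rw [LinearMap.mem_ker] at hx
    show zmap N x ∈ K
    rw [hx]; exact K.zero_mem
  have hmapW : W.map (zmap N) = K := by
    rw [hW, Submodule.map_comap_eq, inf_eq_right.mpr hKrange]
  have hWrank : Module.finrank ℂ W = m' + 2 := by
    have h1 := finrank_eq_map_add (zmap N) W hkerW
    rw [hmapW, hrKn, finrank_ker_zmap hNpos] at h1
    omega
  have hK'rank : Module.finrank ℂ K' = m' := by
    rw [hK', (Submodule.comapSubtypeEquivOfLe hKW).finrank_eq, hrKn]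
  have hsetEq : ({Lm : Submodule ℂ (E N) | Fin.snoc L Lm ∈ Ym N (m' + 1)} =
      {Lm : Submodule ℂ (E N) | Module.finrank ℂ Lm = m' + 1 ∧ K < Lm ∧ Lm ≤ W}) := by
    ext Lm
    simp only [Set.mem_setOf_eq]
    constructor
    · rintro ⟨h0', hmono', hrank', hstab'⟩
      have hrLm : Module.finrank ℂ Lm = m' + 1 := by
        have := hrank' (Fin.last (m' + 1))
        rw [Fin.snoc_last] at this
        rwa [Fin.val_last] at this
      have hKlt : K < Lm := by
        have := hmono' (Fin.castSucc_lt_last (Fin.last m'))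
        rwa [Fin.snoc_castSucc, Fin.snoc_last] at this
      refine ⟨hrLm, hKlt, ?_⟩
      rw [hW, ← Submodule.map_le_iff_le_comap]
      apply step_lemma hKz hKlt hrKn hrLm
      have := hstab' (Fin.last (m' + 1))
      rwa [Fin.snoc_last] at this
    · rintro ⟨hrLm, hKlt, hLW⟩
      have hmapLmK : Lm.map (zmap N) ≤ K := by
        rw [Submodule.map_le_iff_le_comap]; exact hLW
      refine ⟨?_, ?_, ?_, ?_⟩
      · have : (Fin.snoc L Lm : Fin (m' + 2) → Submodule ℂ (E N)) (Fin.castSucc 0) = ⊥ := by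
          rw [Fin.snoc_castSucc]; exact h0
        rwa [Fin.castSucc_zero] at this
      · rw [Fin.strictMono_iff_lt_succ]
        intro i
        induction i using Fin.lastCases with
        | last =>
          rw [Fin.succ_last, Fin.snoc_castSucc, Fin.snoc_last]
          exact hKlt
        | cast j =>
          rw [Fin.succ_castSucc, Fin.snoc_castSucc, Fin.snoc_castSucc]
          exact hmono (Fin.castSucc_lt_succ (i := j))
      · intro j
        induction j using Fin.lastCases with
        | last => rw [Fin.snoc_last, Fin.val_last]; exact hrLm
        | cast j =>
          rw [Fin.snoc_castSucc, Fin.coe_castSucc]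
          exact hrank j
      · intro j
        induction j using Fin.lastCases with
        | last =>
          rw [Fin.snoc_last]
          exact le_trans hmapLmK hKlt.le
        | cast j =>
          rw [Fin.snoc_castSucc]
          exact hstab j
  refine ⟨hsetEq, ?_, ?_⟩
  · have hq := Submodule.finrank_quotient_add_finrank K'
    omega
  · rw [hsetEq]
    constructor
    · -- MapsTo
      rintro Lm ⟨hrLm, hKlt, hLW⟩
      have hK'le : K' ≤ Lm.comap W.subtype := Submodule.comap_mono hKlt.le
      have hPrank : Module.finrank ℂ (Lm.comap W.subtype) = m' + 1 := by
        rw [(Submodule.comapSubtypeEquivOfLe hLW).finrank_eq, hrLm]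
      have h1 := finrank_eq_map_add K'.mkQ (Lm.comap W.subtype)
        (by rw [Submodule.ker_mkQ]; exact hK'le)
      rw [Submodule.ker_mkQ] at h1
      show Module.finrank ℂ ((Lm.comap W.subtype).map K'.mkQ) = 1
      omega
    constructor
    · -- InjOn
      rintro Lm1 ⟨hr1, hlt1, hle1⟩ Lm2 ⟨hr2, hlt2, hle2⟩ heq
      simp only at heq
      have e1 : Lm1.comap W.subtype = Lm2.comap W.subtype := by
        have h := congrArg (Submodule.comap K'.mkQ) heq
        rwa [Submodule.comap_map_eq, Submodule.comap_map_eq, Submodule.ker_mkQ,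
          sup_eq_left.mpr (Submodule.comap_mono hlt1.le),
          sup_eq_left.mpr (Submodule.comap_mono hlt2.le)] at h
      have h2 := congrArg (Submodule.map W.subtype) e1
      rwa [Submodule.map_comap_subtype, Submodule.map_comap_subtype,
        inf_eq_right.mpr hle1, inf_eq_right.mpr hle2] at h2
    · -- SurjOn
      intro l hl
      have hl1 : Module.finrank ℂ l = 1 := hl
      set P := l.comap K'.mkQ with hP
      have hK'P : K' ≤ P := by
        intro x hx
        show K'.mkQ x ∈ l
        have : K'.mkQ x = 0 := by rwa [Submodule.mkQ_apply, Submodule.Quotient.mk_eq_zero]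
        rw [this]; exact l.zero_mem
      have hPmap : P.map K'.mkQ = l := by
        rw [hP, Submodule.map_comap_eq, Submodule.range_mkQ, top_inf_eq]
      have hPrank : Module.finrank ℂ P = m' + 1 := by
        have h1 := finrank_eq_map_add K'.mkQ P (by rw [Submodule.ker_mkQ]; exact hK'P)
        rw [Submodule.ker_mkQ, hPmap, hl1, hK'rank] at h1
        omega
      set Lm := P.map W.subtype with hLm
      have hLmrank : Module.finrank ℂ Lm = m' + 1 := by
        rw [hLm, Submodule.finrank_map_subtype_eq, hPrank]
      have hKLm : K ≤ Lm := by
        have h3 : K'.map W.subtype ≤ Lm := Submodule.map_mono hK'P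
        rwa [hK', Submodule.map_comap_subtype, inf_eq_right.mpr hKW] at h3
      have hKlt : K < Lm := lt_of_le_of_ne hKLm (by
        intro h
        rw [← h] at hLmrank
        omega)
      have hLW : Lm ≤ W := Submodule.map_subtype_le W P
      refine ⟨Lm, ⟨hLmrank, hKlt, hLW⟩, ?_⟩
      show (Lm.comap W.subtype).map K'.mkQ = l
      have e2 : Lm.comap W.subtype = P := by
        rw [hLm, Submodule.comap_map_eq, Submodule.ker_subtype, sup_bot_eq]
      rw [e2, hPmap]
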